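/- Let A ⊂ (−∞,−1] ∪ [1,+∞) be an interval, α ∈ (0,1], p ≥ 0, and 0 ≤ q ≤ p. For a Borel function f on A define ‖f‖_{α,p}^A = sup_{x≠y, x,y∈A} |f(x)−f(y)|/(|x−y|^α(1+|x|^p+|y|^p)). Then ‖f‖_{α,p}^A < ∞ if and only if ‖f(x)/x^{p−q}‖_{α,q}^A < ∞. -/

import Mathlib

open Real

private lemma key_ineq {r a b : ℝ} (hr : 0 ≤ r) (hb : 1 ≤ b) (hba : b ≤ a) :
    b * (a ^ r - b ^ r) ≤ max 1 r * (a - b) * a ^ r := by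
  have hb0 : (0:ℝ) < b := lt_of_lt_of_le one_pos hb
  have ha0 : (0:ℝ) < a := lt_of_lt_of_le hb0 hba
  set t := b / a with ht
  have ht0 : 0 < t := div_pos hb0 ha0
  have ht1 : t ≤ 1 := div_le_one_of_le₀ hba ha0.le
  have hmain : 1 - t ^ r ≤ max 1 r * (1 - t) := by
    rcases le_total r 1 with h | h
    · have h1 : t ^ (1:ℝ) ≤ t ^ r := Real.rpow_le_rpow_of_exponent_ge ht0 ht1 h
      rw [Real.rpow_one] at h1
      have h2 : (1:ℝ) ≤ max 1 r := le_max_left 1 r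
      nlinarith
    · have hB := one_add_mul_self_le_rpow_one_add (s := t - 1) (by linarith) h
      rw [show (1 + (t - 1)) = t by ring] at hB
      rw [max_eq_right h]
      nlinarith
  have hbr : b ^ r = a ^ r * t ^ r := by
    rw [← Real.mul_rpow ha0.le ht0.le]
    rw [show a * t = b by rw [ht]; field_simp]
  have har : (0:ℝ) < a ^ r := Real.rpow_pos_of_pos ha0 r
  have h3 : a ^ r - b ^ r ≤ a ^ r * (max 1 r * (1 - t)) := by
    rw [hbr]
    calc a ^ r - a ^ r * t ^ r = a ^ r * (1 - t ^ r) := by ring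
      _ ≤ a ^ r * (max 1 r * (1 - t)) := by
          exact mul_le_mul_of_nonneg_left hmain har.le
  have h4 : a * (1 - t) = a - b := by rw [ht]; field_simp
  calc b * (a ^ r - b ^ r) ≤ a * (a ^ r - b ^ r) := by
        have : 0 ≤ a ^ r - b ^ r := by
          have := Real.rpow_le_rpow hb0.le hba hr; linarith
        nlinarith
    _ ≤ a * (a ^ r * (max 1 r * (1 - t))) := by
        exact mul_le_mul_of_nonneg_left h3 ha0.le
    _ = (a * (1 - t)) * (max 1 r * a ^ r) := by ring
    _ = max 1 r * (a - b) * a ^ r := by rw [h4]; ring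

private lemma growth_bd {A : Set ℝ} (hA1 : ∀ x ∈ A, 1 ≤ |x|) {α s C : ℝ}
    (hα0 : 0 < α) (hα1 : α ≤ 1) (hs : 0 ≤ s) (hC : 0 ≤ C) {f : ℝ → ℝ} {x₀ : ℝ} (hx₀ : x₀ ∈ A)
    (H : ∀ x ∈ A, ∀ y ∈ A, x ≠ y → |f x - f y| ≤ C * |x - y| ^ α * (1 + |x| ^ s + |y| ^ s)) :
    ∃ K : ℝ, 0 ≤ K ∧ ∀ y ∈ A, |f y| ≤ K * |y| ^ (s + α) := by
  have hx1 : 1 ≤ |x₀| := hA1 x₀ hx₀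
  refine ⟨|f x₀| + 2 * C * |x₀| * (2 + |x₀| ^ s), by positivity, ?_⟩
  intro y hy
  have hy1 : 1 ≤ |y| := hA1 y hy
  have hy0 : (0:ℝ) < |y| := lt_of_lt_of_le one_pos hy1
  have hys : (1:ℝ) ≤ |y| ^ (s + α) := Real.one_le_rpow hy1 (by positivity)
  by_cases hxy : y = x₀
  · subst hxy
    have h0 : (0:ℝ) ≤ 2 * C * |y| * (2 + |y| ^ s) := by positivity
    nlinarith [abs_nonneg (f y)]
  · have hH := H y hy x₀ hx₀ hxy
    have e1 : |y - x₀| ≤ 2 * |x₀| * |y| := by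
      have : |y - x₀| ≤ |y| + |x₀| := by
        calc |y - x₀| = |y + -x₀| := by ring_nf
          _ ≤ |y| + |-x₀| := abs_add_le _ _
          _ = |y| + |x₀| := by rw [abs_neg]
      nlinarith
    have e2 : |y - x₀| ^ α ≤ (2 * |x₀|) * |y| ^ α := by
      calc |y - x₀| ^ α ≤ (2 * |x₀| * |y|) ^ α :=
            Real.rpow_le_rpow (abs_nonneg _) e1 hα0.le
        _ = (2 * |x₀|) ^ α * |y| ^ α := Real.mul_rpow (by positivity) (abs_nonneg _)
        _ ≤ (2 * |x₀|) * |y| ^ α := by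
            have h2 : (2 * |x₀|) ^ α ≤ (2 * |x₀|) ^ (1:ℝ) :=
              Real.rpow_le_rpow_of_exponent_le (by nlinarith) hα1
            rw [Real.rpow_one] at h2
            exact mul_le_mul_of_nonneg_right h2 (by positivity)
    have hys' : (1:ℝ) ≤ |y| ^ s := Real.one_le_rpow hy1 hs
    have e3 : 1 + |y| ^ s + |x₀| ^ s ≤ (2 + |x₀| ^ s) * |y| ^ s := by
      nlinarith [Real.rpow_nonneg (abs_nonneg x₀) s]
    have e4 : |f y - f x₀| ≤ 2 * C * |x₀| * (2 + |x₀| ^ s) * |y| ^ (s + α) := by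
      calc |f y - f x₀| ≤ C * |y - x₀| ^ α * (1 + |y| ^ s + |x₀| ^ s) := hH
        _ ≤ C * ((2 * |x₀|) * |y| ^ α) * ((2 + |x₀| ^ s) * |y| ^ s) := by
            have hp1 : (0:ℝ) ≤ |y - x₀| ^ α := Real.rpow_nonneg (abs_nonneg _) α
            have hp2 : (0:ℝ) ≤ 1 + |y| ^ s + |x₀| ^ s := by positivity
            have hp3 : (0:ℝ) ≤ C * ((2 * |x₀|) * |y| ^ α) := by positivity
            calc C * |y - x₀| ^ α * (1 + |y| ^ s + |x₀| ^ s)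
                ≤ C * ((2 * |x₀|) * |y| ^ α) * (1 + |y| ^ s + |x₀| ^ s) := by
                  exact mul_le_mul_of_nonneg_right
                    (mul_le_mul_of_nonneg_left e2 hC) hp2
              _ ≤ C * ((2 * |x₀|) * |y| ^ α) * ((2 + |x₀| ^ s) * |y| ^ s) :=
                  mul_le_mul_of_nonneg_left e3 hp3
        _ = 2 * C * |x₀| * (2 + |x₀| ^ s) * (|y| ^ s * |y| ^ α) := by ring
        _ = 2 * C * |x₀| * (2 + |x₀| ^ s) * |y| ^ (s + α) := by
            rw [← Real.rpow_add hy0]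
    have e5 : |f x₀| ≤ |f x₀| * |y| ^ (s + α) :=
      le_mul_of_one_le_right (abs_nonneg _) hys
    calc |f y| = |(f y - f x₀) + f x₀| := by ring_nf
      _ ≤ |f y - f x₀| + |f x₀| := abs_add_le _ _
      _ ≤ 2 * C * |x₀| * (2 + |x₀| ^ s) * |y| ^ (s + α) + |f x₀| * |y| ^ (s + α) := by
          linarith
      _ = (|f x₀| + 2 * C * |x₀| * (2 + |x₀| ^ s)) * |y| ^ (s + α) := by ring

/-- dividing by `|x|^r` lowers the weight exponent from `t+r` to `t`. -/
private lemma holder_div {A : Set ℝ} (hA1 : ∀ x ∈ A, 1 ≤ |x|) {α t r C : ℝ}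
    (hα0 : 0 < α) (hα1 : α ≤ 1) (ht : 0 ≤ t) (hr : 0 ≤ r) (hC : 0 ≤ C) {f : ℝ → ℝ}
    (H : ∀ x ∈ A, ∀ y ∈ A, x ≠ y →
      |f x - f y| ≤ C * |x - y| ^ α * (1 + |x| ^ (t + r) + |y| ^ (t + r))) :
    ∃ C' : ℝ, ∀ x ∈ A, ∀ y ∈ A, x ≠ y →
      |f x / |x| ^ r - f y / |y| ^ r| ≤ C' * |x - y| ^ α * (1 + |x| ^ t + |y| ^ t) := by
  rcases A.eq_empty_or_nonempty with hAe | ⟨x₀, hx₀⟩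
  · exact ⟨0, by simp [hAe]⟩
  obtain ⟨K, hK, hKb⟩ := growth_bd hA1 hα0 hα1 (by positivity) hC hx₀ H
  refine ⟨3 * C + K * max 1 r, ?_⟩
  have main : ∀ x ∈ A, ∀ y ∈ A, x ≠ y → |y| ≤ |x| →
      |f x / |x| ^ r - f y / |y| ^ r| ≤
        (3 * C + K * max 1 r) * |x - y| ^ α * (1 + |x| ^ t + |y| ^ t) := by
    intro x hx y hy hxy hba
    set a := |x| with ha
    set b := |y| with hb
    set d := |x - y| with hd
    have hb1 : 1 ≤ b := hA1 y hy
    have hb0 : (0:ℝ) < b := lt_of_lt_of_le one_pos hb1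
    have ha0 : (0:ℝ) < a := lt_of_lt_of_le hb0 hba
    have hd0 : (0:ℝ) < d := abs_pos.mpr (sub_ne_zero.mpr hxy)
    have hdab : a - b ≤ d := by
      have h1 : |a - b| ≤ |x - y| := abs_abs_sub_abs_le_abs_sub x y
      calc a - b ≤ |a - b| := le_abs_self _
        _ ≤ d := h1
    have har : (0:ℝ) < a ^ r := Real.rpow_pos_of_pos ha0 r
    have hbr : (0:ℝ) < b ^ r := Real.rpow_pos_of_pos hb0 r
    have hrr : b ^ r ≤ a ^ r := Real.rpow_le_rpow hb0.le hba hr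
    have hdα : (0:ℝ) ≤ d ^ α := Real.rpow_nonneg (abs_nonneg _) α
    have hat1 : (1:ℝ) ≤ a ^ t := Real.one_le_rpow (le_trans hb1 hba) ht
    have hbt1 : (1:ℝ) ≤ b ^ t := Real.one_le_rpow hb1 ht
    have hM1 : (1:ℝ) ≤ max 1 r := le_max_left 1 r
    -- split
    have hsplit : |f x / a ^ r - f y / b ^ r| ≤
        |f x - f y| / a ^ r + |f y| * (a ^ r - b ^ r) / (a ^ r * b ^ r) := by
      have hid : f x / a ^ r - f y / b ^ r =
          (f x - f y) / a ^ r + f y * (b ^ r - a ^ r) / (a ^ r * b ^ r) := by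
        field_simp
        ring
      rw [hid]
      refine (abs_add_le _ _).trans ?_
      rw [abs_div, abs_div, abs_mul, abs_of_pos har, abs_of_pos (mul_pos har hbr)]
      rw [abs_sub_comm (b ^ r), abs_of_nonneg (sub_nonneg.mpr hrr)]
    -- first term
    have hT1 : |f x - f y| / a ^ r ≤ 3 * C * d ^ α * a ^ t := by
      rw [div_le_iff₀ har]
      have h3 : a ^ (t + r) = a ^ t * a ^ r := Real.rpow_add ha0 t r
      have h1 : (1:ℝ) ≤ a ^ (t + r) := Real.one_le_rpow (le_trans hb1 hba) (by positivity)
      have h2 : b ^ (t + r) ≤ a ^ (t + r) := Real.rpow_le_rpow hb0.le hba (by positivity)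
      calc |f x - f y| ≤ C * d ^ α * (1 + a ^ (t + r) + b ^ (t + r)) := H x hx y hy hxy
        _ ≤ C * d ^ α * (3 * a ^ (t + r)) := by
            have : (0:ℝ) ≤ C * d ^ α := by positivity
            nlinarith
        _ = 3 * C * d ^ α * a ^ t * a ^ r := by rw [h3]; ring
    -- second term
    have hfy : |f y| ≤ K * b ^ (t + r + α) := by
      have := hKb y hy
      rwa [show t + r + α = (t + r) + α by ring]
    have hT2 : |f y| * (a ^ r - b ^ r) / (a ^ r * b ^ r) ≤ K * max 1 r * d ^ α * b ^ t := by
      rw [div_le_iff₀ (mul_pos har hbr)]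
      rcases le_total b (a - b) with hcase | hcase
      · -- b ≤ a - b, crude bound
        have hbd : b ^ α ≤ d ^ α :=
          Real.rpow_le_rpow hb0.le (le_trans hcase hdab) hα0.le
        calc |f y| * (a ^ r - b ^ r) ≤ (K * b ^ (t + r + α)) * a ^ r := by
              refine mul_le_mul hfy (by linarith) (sub_nonneg.mpr hrr) (by positivity)
          _ = K * (b ^ t * b ^ r * b ^ α) * a ^ r := by
              rw [Real.rpow_add hb0 (t + r) α, Real.rpow_add hb0 t r]
          _ ≤ K * (b ^ t * b ^ r * d ^ α) * a ^ r := by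
              have h0 : (0:ℝ) ≤ K * (b ^ t * b ^ r) * a ^ r := by positivity
              nlinarith
          _ ≤ max 1 r * (K * (b ^ t * b ^ r * d ^ α) * a ^ r) :=
              le_mul_of_one_le_left (by positivity) hM1
          _ = K * max 1 r * d ^ α * b ^ t * (a ^ r * b ^ r) := by ring
      · -- a - b ≤ b, use key inequality
        have hkey : b * (a ^ r - b ^ r) ≤ max 1 r * (a - b) * a ^ r := key_ineq hr hb1 hba
        have hδ : a - b ≤ d ^ α * b ^ (1 - α) := by
          rcases eq_or_lt_of_le (sub_nonneg.mpr hba) with h0 | h0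
          · rw [← h0]; positivity
          · have h1 : a - b = (a - b) ^ α * (a - b) ^ (1 - α) := by
              rw [← Real.rpow_add h0, show α + (1 - α) = 1 by ring, Real.rpow_one]
            rw [h1]
            have g1 : (a - b) ^ α ≤ d ^ α := Real.rpow_le_rpow h0.le hdab hα0.le
            have g2 : (a - b) ^ (1 - α) ≤ b ^ (1 - α) :=
              Real.rpow_le_rpow h0.le hcase (by linarith)
            exact mul_le_mul g1 g2 (Real.rpow_nonneg h0.le _) hdα
        suffices hS : b * (|f y| * (a ^ r - b ^ r)) ≤
            b * (K * max 1 r * d ^ α * b ^ t * (a ^ r * b ^ r)) from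
          le_of_mul_le_mul_left hS hb0
        calc b * (|f y| * (a ^ r - b ^ r)) = |f y| * (b * (a ^ r - b ^ r)) := by ring
          _ ≤ (K * b ^ (t + r + α)) * (max 1 r * (a - b) * a ^ r) := by
              refine mul_le_mul hfy hkey
                (mul_nonneg hb0.le (sub_nonneg.mpr hrr)) (by positivity)
          _ ≤ (K * b ^ (t + r + α)) * (max 1 r * (d ^ α * b ^ (1 - α)) * a ^ r) := by
              have h5 : (0:ℝ) ≤ K * b ^ (t + r + α) := by positivity
              have h6 : max 1 r * (a - b) * a ^ r ≤
                  max 1 r * (d ^ α * b ^ (1 - α)) * a ^ r := by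
                refine mul_le_mul_of_nonneg_right
                  (mul_le_mul_of_nonneg_left hδ (by positivity)) har.le
              exact mul_le_mul_of_nonneg_left h6 h5
          _ = K * max 1 r * d ^ α * (b ^ (t + r + α) * b ^ (1 - α)) * a ^ r := by ring
          _ = K * max 1 r * d ^ α * (b ^ t * b ^ r * b) * a ^ r := by
              rw [← Real.rpow_add hb0, show t + r + α + (1 - α) = t + r + 1 by ring,
                Real.rpow_add hb0 (t + r) 1, Real.rpow_add hb0 t r, Real.rpow_one]
          _ = b * (K * max 1 r * d ^ α * b ^ t * (a ^ r * b ^ r)) := by ring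
    calc |f x / a ^ r - f y / b ^ r|
        ≤ |f x - f y| / a ^ r + |f y| * (a ^ r - b ^ r) / (a ^ r * b ^ r) := hsplit
      _ ≤ 3 * C * d ^ α * a ^ t + K * max 1 r * d ^ α * b ^ t := add_le_add hT1 hT2
      _ ≤ (3 * C + K * max 1 r) * d ^ α * (1 + a ^ t + b ^ t) := by
          nlinarith [mul_nonneg (mul_nonneg hC hdα) (by linarith : (0:ℝ) ≤ 1 + b ^ t),
            mul_nonneg (mul_nonneg (mul_nonneg hK (by linarith : (0:ℝ) ≤ max 1 r)) hdα)
              (by linarith : (0:ℝ) ≤ 1 + a ^ t)]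
  intro x hx y hy hxy
  rcases le_total |y| |x| with h | h
  · exact main x hx y hy hxy h
  · have h2 := main y hy x hx (Ne.symm hxy) h
    calc |f x / |x| ^ r - f y / |y| ^ r| = |f y / |y| ^ r - f x / |x| ^ r| :=
          abs_sub_comm _ _
      _ ≤ (3 * C + K * max 1 r) * |y - x| ^ α * (1 + |y| ^ t + |x| ^ t) := h2
      _ = (3 * C + K * max 1 r) * |x - y| ^ α * (1 + |x| ^ t + |y| ^ t) := by
          rw [abs_sub_comm y x]; ring

/-- multiplying by `|x|^r` raises the weight exponent from `t` to `t+r`. -/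
private lemma holder_mul {A : Set ℝ} (hA1 : ∀ x ∈ A, 1 ≤ |x|) {α t r C : ℝ}
    (hα0 : 0 < α) (hα1 : α ≤ 1) (ht : 0 ≤ t) (hr : 0 ≤ r) (hC : 0 ≤ C) {g : ℝ → ℝ}
    (H : ∀ x ∈ A, ∀ y ∈ A, x ≠ y →
      |g x - g y| ≤ C * |x - y| ^ α * (1 + |x| ^ t + |y| ^ t)) :
    ∃ C' : ℝ, ∀ x ∈ A, ∀ y ∈ A, x ≠ y →
      |g x * |x| ^ r - g y * |y| ^ r| ≤
        C' * |x - y| ^ α * (1 + |x| ^ (t + r) + |y| ^ (t + r)) := by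
  rcases A.eq_empty_or_nonempty with hAe | ⟨x₀, hx₀⟩
  · exact ⟨0, by simp [hAe]⟩
  obtain ⟨K, hK, hKb⟩ := growth_bd hA1 hα0 hα1 ht hC hx₀ H
  refine ⟨3 * C + K * max 1 r, ?_⟩
  have main : ∀ x ∈ A, ∀ y ∈ A, x ≠ y → |y| ≤ |x| →
      |g x * |x| ^ r - g y * |y| ^ r| ≤
        (3 * C + K * max 1 r) * |x - y| ^ α * (1 + |x| ^ (t + r) + |y| ^ (t + r)) := by
    intro x hx y hy hxy hba
    set a := |x| with ha
    set b := |y| with hb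
    set d := |x - y| with hd
    have hb1 : 1 ≤ b := hA1 y hy
    have hb0 : (0:ℝ) < b := lt_of_lt_of_le one_pos hb1
    have ha0 : (0:ℝ) < a := lt_of_lt_of_le hb0 hba
    have ha1 : 1 ≤ a := le_trans hb1 hba
    have hd0 : (0:ℝ) < d := abs_pos.mpr (sub_ne_zero.mpr hxy)
    have hdab : a - b ≤ d := by
      have h1 : |a - b| ≤ |x - y| := abs_abs_sub_abs_le_abs_sub x y
      calc a - b ≤ |a - b| := le_abs_self _
        _ ≤ d := h1
    have har : (0:ℝ) < a ^ r := Real.rpow_pos_of_pos ha0 r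
    have hbr : (0:ℝ) < b ^ r := Real.rpow_pos_of_pos hb0 r
    have hrr : b ^ r ≤ a ^ r := Real.rpow_le_rpow hb0.le hba hr
    have hdα : (0:ℝ) ≤ d ^ α := Real.rpow_nonneg (abs_nonneg _) α
    have hat : a ^ (t + r) = a ^ t * a ^ r := Real.rpow_add ha0 t r
    have htt : b ^ t ≤ a ^ t := Real.rpow_le_rpow hb0.le hba ht
    have hM1 : (1:ℝ) ≤ max 1 r := le_max_left 1 r
    have hsplit : |g x * a ^ r - g y * b ^ r| ≤
        |g x - g y| * a ^ r + |g y| * (a ^ r - b ^ r) := by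
      have hid : g x * a ^ r - g y * b ^ r =
          (g x - g y) * a ^ r + g y * (a ^ r - b ^ r) := by ring
      rw [hid]
      refine (abs_add_le _ _).trans ?_
      rw [abs_mul, abs_mul, abs_of_pos har, abs_of_nonneg (sub_nonneg.mpr hrr)]
    have hT1 : |g x - g y| * a ^ r ≤ 3 * C * d ^ α * (a ^ t * a ^ r) := by
      have h1 : (1:ℝ) ≤ a ^ t := Real.one_le_rpow ha1 ht
      calc |g x - g y| * a ^ r ≤ (C * d ^ α * (1 + a ^ t + b ^ t)) * a ^ r :=
            mul_le_mul_of_nonneg_right (H x hx y hy hxy) har.le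
        _ ≤ (C * d ^ α * (3 * a ^ t)) * a ^ r := by
            have h9 : (0:ℝ) ≤ C * d ^ α := by positivity
            exact mul_le_mul_of_nonneg_right
              (mul_le_mul_of_nonneg_left (by linarith) h9) har.le
        _ = 3 * C * d ^ α * (a ^ t * a ^ r) := by ring
    have hfy : |g y| ≤ K * b ^ (t + α) := hKb y hy
    have hT2 : |g y| * (a ^ r - b ^ r) ≤ K * max 1 r * d ^ α * (a ^ t * a ^ r) := by
      rcases le_total b (a - b) with hcase | hcase
      · have hbd : b ^ α ≤ d ^ α :=
          Real.rpow_le_rpow hb0.le (le_trans hcase hdab) hα0.le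
        calc |g y| * (a ^ r - b ^ r) ≤ (K * b ^ (t + α)) * a ^ r :=
              mul_le_mul hfy (by linarith) (sub_nonneg.mpr hrr) (by positivity)
          _ = K * (b ^ t * b ^ α) * a ^ r := by rw [Real.rpow_add hb0 t α]
          _ ≤ K * (a ^ t * d ^ α) * a ^ r := by
              have h0 : (0:ℝ) ≤ b ^ t := (Real.rpow_pos_of_pos hb0 t).le
              have h1 : (0:ℝ) ≤ b ^ α := (Real.rpow_pos_of_pos hb0 α).le
              have h2 : b ^ t * b ^ α ≤ a ^ t * d ^ α := by
                refine mul_le_mul htt hbd h1 (Real.rpow_nonneg ha0.le t)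
              have h3 : (0:ℝ) ≤ K * a ^ r := by positivity
              nlinarith
          _ ≤ max 1 r * (K * (a ^ t * d ^ α) * a ^ r) :=
              le_mul_of_one_le_left (by positivity) hM1
          _ = K * max 1 r * d ^ α * (a ^ t * a ^ r) := by ring
      · have hkey : b * (a ^ r - b ^ r) ≤ max 1 r * (a - b) * a ^ r := key_ineq hr hb1 hba
        have hδ : a - b ≤ d ^ α * b ^ (1 - α) := by
          rcases eq_or_lt_of_le (sub_nonneg.mpr hba) with h0 | h0
          · rw [← h0]; positivity
          · have h1 : a - b = (a - b) ^ α * (a - b) ^ (1 - α) := by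
              rw [← Real.rpow_add h0, show α + (1 - α) = 1 by ring, Real.rpow_one]
            rw [h1]
            have g1 : (a - b) ^ α ≤ d ^ α := Real.rpow_le_rpow h0.le hdab hα0.le
            have g2 : (a - b) ^ (1 - α) ≤ b ^ (1 - α) :=
              Real.rpow_le_rpow h0.le hcase (by linarith)
            exact mul_le_mul g1 g2 (Real.rpow_nonneg h0.le _) hdα
        suffices hS : b * (|g y| * (a ^ r - b ^ r)) ≤
            b * (K * max 1 r * d ^ α * (a ^ t * a ^ r)) from
          le_of_mul_le_mul_left hS hb0
        calc b * (|g y| * (a ^ r - b ^ r)) = |g y| * (b * (a ^ r - b ^ r)) := by ring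
          _ ≤ (K * b ^ (t + α)) * (max 1 r * (a - b) * a ^ r) :=
              mul_le_mul hfy hkey (mul_nonneg hb0.le (sub_nonneg.mpr hrr)) (by positivity)
          _ ≤ (K * b ^ (t + α)) * (max 1 r * (d ^ α * b ^ (1 - α)) * a ^ r) := by
              have h5 : (0:ℝ) ≤ K * b ^ (t + α) := by positivity
              refine mul_le_mul_of_nonneg_left ?_ h5
              exact mul_le_mul_of_nonneg_right
                (mul_le_mul_of_nonneg_left hδ (by positivity)) har.le
          _ = K * max 1 r * d ^ α * (b ^ (t + α) * b ^ (1 - α)) * a ^ r := by ring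
          _ = K * max 1 r * d ^ α * (b ^ t * b) * a ^ r := by
              rw [← Real.rpow_add hb0, show t + α + (1 - α) = t + 1 by ring,
                Real.rpow_add hb0 t 1, Real.rpow_one]
          _ ≤ K * max 1 r * d ^ α * (a ^ t * b) * a ^ r := by
              have h7 : (0:ℝ) ≤ K * max 1 r * d ^ α := by positivity
              have h7b : b ^ t * b ≤ a ^ t * b :=
                mul_le_mul_of_nonneg_right htt hb0.le
              exact mul_le_mul_of_nonneg_right
                (mul_le_mul_of_nonneg_left h7b h7) har.le
          _ = b * (K * max 1 r * d ^ α * (a ^ t * a ^ r)) := by ring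
    have hatr1 : (1:ℝ) ≤ a ^ (t + r) := Real.one_le_rpow ha1 (by positivity)
    have hbtr0 : (0:ℝ) ≤ b ^ (t + r) := (Real.rpow_pos_of_pos hb0 _).le
    calc |g x * a ^ r - g y * b ^ r|
        ≤ |g x - g y| * a ^ r + |g y| * (a ^ r - b ^ r) := hsplit
      _ ≤ 3 * C * d ^ α * (a ^ t * a ^ r) + K * max 1 r * d ^ α * (a ^ t * a ^ r) :=
          add_le_add hT1 hT2
      _ = (3 * C + K * max 1 r) * d ^ α * a ^ (t + r) := by rw [hat]; ring
      _ ≤ (3 * C + K * max 1 r) * d ^ α * (1 + a ^ (t + r) + b ^ (t + r)) := by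
          have h8 : (0:ℝ) ≤ (3 * C + K * max 1 r) * d ^ α := by positivity
          exact mul_le_mul_of_nonneg_left (by linarith) h8
  intro x hx y hy hxy
  rcases le_total |y| |x| with h | h
  · exact main x hx y hy hxy h
  · have h2 := main y hy x hx (Ne.symm hxy) h
    calc |g x * |x| ^ r - g y * |y| ^ r| = |g y * |y| ^ r - g x * |x| ^ r| :=
          abs_sub_comm _ _
      _ ≤ (3 * C + K * max 1 r) * |y - x| ^ α * (1 + |y| ^ (t + r) + |x| ^ (t + r)) := h2
      _ = (3 * C + K * max 1 r) * |x - y| ^ α * (1 + |x| ^ (t + r) + |y| ^ (t + r)) := by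
          rw [abs_sub_comm y x]; ring

/-- For an interval `A ⊆ (−∞,−1] ∪ [1,∞)`, `0 ≤ q ≤ p`, the seminorm
`‖f‖_{α,p}^A` is finite iff `‖f(x)/x^{p−q}‖_{α,q}^A` is finite, where `x^{p−q}`
denotes the sign-preserving real power `sign(x)·|x|^{p−q}`. -/
theorem stmt_14 (A : Set ℝ) (hA : A.OrdConnected)
    (hA1 : A ⊆ Set.Iic (-1) ∪ Set.Ici 1)
    (α p q : ℝ) (hα : α ∈ Set.Ioc (0:ℝ) 1) (hq : 0 ≤ q) (hqp : q ≤ p)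
    (f : ℝ → ℝ) (hf : Measurable f) :
    (∃ C : ℝ, ∀ x ∈ A, ∀ y ∈ A, x ≠ y →
      |f x - f y| ≤ C * |x - y| ^ α * (1 + |x| ^ p + |y| ^ p)) ↔
    (∃ C : ℝ, ∀ x ∈ A, ∀ y ∈ A, x ≠ y →
      |f x / (Real.sign x * |x| ^ (p - q)) - f y / (Real.sign y * |y| ^ (p - q))| ≤
        C * |x - y| ^ α * (1 + |x| ^ q + |y| ^ q)) := by
  obtain ⟨hα0, hα1⟩ := hα
  set r := p - q with hrdef
  have hr : 0 ≤ r := by rw [hrdef]; linarith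
  have hA1' : ∀ x ∈ A, 1 ≤ |x| := by
    intro x hx
    rcases hA1 hx with h | h
    · have h' : x ≤ -1 := h
      exact le_abs.mpr (Or.inr (by linarith))
    · exact le_abs.mpr (Or.inl h)
  -- A lies on one side of 0
  have hside : (∀ x ∈ A, 1 ≤ x) ∨ (∀ x ∈ A, x ≤ -1) := by
    by_contra hcon
    push_neg at hcon
    obtain ⟨⟨x, hx, hx1⟩, ⟨y, hy, hy1⟩⟩ := hcon
    have hx2 : x ≤ -1 := by
      rcases hA1 hx with h | h
      · exact h
      · exact absurd h (not_le.mpr hx1)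
    have hy2 : 1 ≤ y := by
      rcases hA1 hy with h | h
      · exact absurd h (not_le.mpr hy1)
      · exact h
    have h0 : (0:ℝ) ∈ A := hA.out hx hy ⟨by linarith, by linarith⟩
    have := hA1' 0 h0
    simp at this
    linarith
  -- the sign factor does not change absolute differences
  have hsign : ∀ x ∈ A, ∀ y ∈ A,
      |f x / (Real.sign x * |x| ^ r) - f y / (Real.sign y * |y| ^ r)| =
        |f x / |x| ^ r - f y / |y| ^ r| := by
    intro x hx y hy
    rcases hside with hs | hs
    · have hx0 : 0 < x := lt_of_lt_of_le one_pos (hs x hx)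
      have hy0 : 0 < y := lt_of_lt_of_le one_pos (hs y hy)
      rw [Real.sign_of_pos hx0, Real.sign_of_pos hy0, one_mul, one_mul]
    · have hx0 : x < 0 := lt_of_le_of_lt (hs x hx) (by norm_num)
      have hy0 : y < 0 := lt_of_le_of_lt (hs y hy) (by norm_num)
      rw [Real.sign_of_neg hx0, Real.sign_of_neg hy0]
      rw [show (-1 : ℝ) * |x| ^ r = -(|x| ^ r) by ring,
        show (-1 : ℝ) * |y| ^ r = -(|y| ^ r) by ring, div_neg, div_neg]
      rw [show -(f x / |x| ^ r) - -(f y / |y| ^ r) = -(f x / |x| ^ r - f y / |y| ^ r) by ring,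
        abs_neg]
  constructor
  · rintro ⟨C, hC⟩
    have hC' : ∀ x ∈ A, ∀ y ∈ A, x ≠ y →
        |f x - f y| ≤ max C 0 * |x - y| ^ α * (1 + |x| ^ (q + r) + |y| ^ (q + r)) := by
      intro x hx y hy hxy
      have h1 := hC x hx y hy hxy
      have h2 : q + r = p := by rw [hrdef]; ring
      rw [h2]
      have h3 : (0:ℝ) ≤ |x - y| ^ α * (1 + |x| ^ p + |y| ^ p) := by
        have := hA1' x hx
        have := hA1' y hy
        positivity
      calc |f x - f y| ≤ C * |x - y| ^ α * (1 + |x| ^ p + |y| ^ p) := h1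
        _ ≤ max C 0 * |x - y| ^ α * (1 + |x| ^ p + |y| ^ p) := by
            rw [mul_assoc, mul_assoc]
            exact mul_le_mul_of_nonneg_right (le_max_left C 0) h3
    obtain ⟨C', hC'2⟩ := holder_div hA1' hα0 hα1 hq hr (le_max_right C 0) hC'
    exact ⟨C', fun x hx y hy hxy => by
      rw [hsign x hx y hy]; exact hC'2 x hx y hy hxy⟩
  · rintro ⟨C, hC⟩
    set g : ℝ → ℝ := fun z => f z / |z| ^ r with hg
    have hC' : ∀ x ∈ A, ∀ y ∈ A, x ≠ y →
        |g x - g y| ≤ max C 0 * |x - y| ^ α * (1 + |x| ^ q + |y| ^ q) := by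
      intro x hx y hy hxy
      have h1 := hC x hx y hy hxy
      rw [hsign x hx y hy] at h1
      have h3 : (0:ℝ) ≤ |x - y| ^ α * (1 + |x| ^ q + |y| ^ q) := by
        have := hA1' x hx
        have := hA1' y hy
        positivity
      calc |g x - g y| ≤ C * |x - y| ^ α * (1 + |x| ^ q + |y| ^ q) := h1
        _ ≤ max C 0 * |x - y| ^ α * (1 + |x| ^ q + |y| ^ q) := by
            rw [mul_assoc, mul_assoc]
            exact mul_le_mul_of_nonneg_right (le_max_left C 0) h3
    obtain ⟨C', hC'2⟩ := holder_mul hA1' hα0 hα1 hq hr (le_max_right C 0) hC'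
    refine ⟨C', fun x hx y hy hxy => ?_⟩
    have h4 := hC'2 x hx y hy hxy
    have hx0 : (|x| : ℝ) ^ r ≠ 0 := by
      have := hA1' x hx
      positivity
    have hy0 : (|y| : ℝ) ^ r ≠ 0 := by
      have := hA1' y hy
      positivity
    have h5 : g x * |x| ^ r = f x := div_mul_cancel₀ _ hx0
    have h6 : g y * |y| ^ r = f y := div_mul_cancel₀ _ hy0
    rw [h5, h6] at h4
    have h7 : q + r = p := by rw [hrdef]; ring
    rwa [h7] at h4
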